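/- Characterization of critical products of Łukasiewicz chains: let l ≥ 1 and let n : Fin l → ℕ be positive, and set A = ∏_{i<l} Ł_{n_i} (componentwise operations). Then A is critical (there exist no index type I, no family (B_t)_{t∈I} of proper subalgebras of A, and no injective homomorphism from A into ∏_{t∈I} B_t) if and only if: (1) n_i ≠ n_j whenever i ≠ j, and (2) for all j, j' < l, if there exists i ≠ j with n_i ∣ n_j and there exists i' ≠ j' with n_{i'} ∣ n_{j'}, then j = j'. -/

import Mathlib

/-- The carrier of the Łukasiewicz chain Łₙ : {k/n : k ∈ ℕ, 0 ≤ k ≤ n} ⊆ ℚ. -/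
abbrev Luk (n : ℕ+) : Type := {x : ℚ // ∃ k : ℕ, k ≤ (n : ℕ) ∧ x = (k : ℚ) / (n : ℕ)}

/-- The constant 0 of Łₙ. -/
def lukZero (n : ℕ+) : Luk n := ⟨0, 0, Nat.zero_le _, by simp⟩

/-- The negation ¬x = 1 - x of Łₙ. -/
def lukNeg {n : ℕ+} (x : Luk n) : Luk n :=
  ⟨1 - x.1, by
    obtain ⟨k, hk, hx⟩ := x.2
    refine ⟨(n : ℕ) - k, Nat.sub_le _ _, ?_⟩
    have hn : ((n : ℕ) : ℚ) ≠ 0 := by exact_mod_cast n.pos.ne'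
    rw [hx, Nat.cast_sub hk, sub_div, div_self hn]⟩

/-- The truncated sum x ⊕ y = min 1 (x + y) of Łₙ. -/
def lukOplus {n : ℕ+} (x y : Luk n) : Luk n :=
  ⟨min 1 (x.1 + y.1), by
    obtain ⟨k, hk, hx⟩ := x.2
    obtain ⟨j, hj, hy⟩ := y.2
    refine ⟨min (n : ℕ) (k + j), min_le_left _ _, ?_⟩
    have hn : (0 : ℚ) < ((n : ℕ) : ℚ) := by exact_mod_cast n.pos
    rw [hx, hy, ← add_div]
    rcases le_total (k + j) (n : ℕ) with h | h
    · rw [min_eq_right h, min_eq_right]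
      · push_cast; ring_nf
      · rw [div_le_one hn]; exact_mod_cast h
    · rw [min_eq_left h, min_eq_left, div_self hn.ne']
      · rw [one_le_div hn]; exact_mod_cast h⟩

/-- A subset of ∏ Ł_(n i) is a subalgebra if it contains 0 and is closed under
the componentwise operations ⊕ and ¬. -/
def IsProdSubalg {l : ℕ} {n : Fin l → ℕ+} (S : Set (∀ i, Luk (n i))) : Prop :=
  (fun i => lukZero (n i)) ∈ S ∧
    (∀ x ∈ S, ∀ y ∈ S, (fun i => lukOplus (x i) (y i)) ∈ S) ∧
    ∀ x ∈ S, (fun i => lukNeg (x i)) ∈ S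

/-- ∏ Ł_(n i) is critical: it admits no injective homomorphism into a product of
proper subalgebras of itself (the subalgebras carrying the induced operations). -/
def ProdLukCritical {l : ℕ} (n : Fin l → ℕ+) : Prop :=
  ¬ ∃ (I : Type) (B : I → Set (∀ i, Luk (n i))),
      (∀ t, IsProdSubalg (B t) ∧ B t ≠ Set.univ) ∧
      ∃ f : (∀ i, Luk (n i)) → ∀ t, (B t : Set (∀ i, Luk (n i))),
        Function.Injective f ∧
        (∀ a b t, ((f (fun i => lukOplus (a i) (b i)) t : ∀ i, Luk (n i)) =
          fun i => lukOplus ((f a t : ∀ i, Luk (n i)) i) ((f b t : ∀ i, Luk (n i)) i))) ∧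
        (∀ a t, ((f (fun i => lukNeg (a i)) t : ∀ i, Luk (n i)) =
          fun i => lukNeg ((f a t : ∀ i, Luk (n i)) i))) ∧
        (∀ t, ((f (fun i => lukZero (n i)) t : ∀ i, Luk (n i)) = fun i => lukZero (n i)))

namespace LukCrit

lemma luk_nonneg {n : ℕ+} (x : Luk n) : 0 ≤ x.1 := by
  obtain ⟨k, hk, hx⟩ := x.2
  rw [hx]
  positivity

lemma luk_le_one {n : ℕ+} (x : Luk n) : x.1 ≤ 1 := by
  obtain ⟨k, hk, hx⟩ := x.2
  have hn : (0:ℚ) < ((n:ℕ):ℚ) := by exact_mod_cast n.pos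
  rw [hx, div_le_one hn]
  exact_mod_cast hk

lemma luk_val_mem_of_dvd {m N : ℕ+} (h : (m:ℕ) ∣ (N:ℕ)) (u : Luk m) :
    ∃ k : ℕ, k ≤ (N:ℕ) ∧ u.1 = (k:ℚ) / (N:ℕ) := by
  obtain ⟨k, hk, hu⟩ := u.2
  obtain ⟨c, hc⟩ := h
  have hc0 : c ≠ 0 := by
    rintro rfl
    simp at hc
  refine ⟨k * c, ?_, ?_⟩
  · rw [hc]; exact Nat.mul_le_mul_right _ hk
  · rw [hu, hc]
    push_cast
    rw [mul_div_mul_right _ _ (by exact_mod_cast hc0)]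

/-- The element j/m of Łₘ. -/
def ujElt (m : ℕ+) (j : ℕ) (hj : j ≤ (m:ℕ)) : Luk m := ⟨(j:ℚ)/((m:ℕ):ℚ), j, hj, rfl⟩

@[simp] lemma ujElt_val (m : ℕ+) (j : ℕ) (hj : j ≤ (m:ℕ)) :
    (ujElt m j hj).1 = (j:ℚ)/((m:ℕ):ℚ) := rfl

/-- Rigidity of homomorphisms between Łukasiewicz chains (value version). -/
lemma chain_rigidity {m N : ℕ+} (φ : Luk m → ℚ)
    (hmem : ∀ u, ∃ k : ℕ, k ≤ (N:ℕ) ∧ φ u = (k:ℚ) / (N:ℕ))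
    (hz : φ (lukZero m) = 0)
    (hneg : ∀ u, φ (lukNeg u) = 1 - φ u)
    (hplus : ∀ u v, φ (lukOplus u v) = min 1 (φ u + φ v)) :
    (∀ u, φ u = u.1) ∧ (m:ℕ) ∣ (N:ℕ) := by
  have hN : (0:ℚ) < ((N:ℕ):ℚ) := by exact_mod_cast N.pos
  have hM : (0:ℚ) < ((m:ℕ):ℚ) := by exact_mod_cast m.pos
  have hM1 : 1 ≤ (m:ℕ) := m.one_le
  have hnn : ∀ u, 0 ≤ φ u := by
    intro u
    obtain ⟨k, hk, hu⟩ := hmem u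
    rw [hu]; positivity
  set x : ℚ := φ (ujElt m 1 hM1) with hxdef
  have hx0 : 0 ≤ x := hnn _
  -- key: φ (j/m) = min 1 (j*x)
  have key : ∀ j : ℕ, ∀ hj : j ≤ (m:ℕ), φ (ujElt m j hj) = min 1 ((j:ℚ) * x) := by
    intro j
    induction j with
    | zero =>
      intro hj
      have h0 : ujElt m 0 hj = lukZero m := by
        apply Subtype.ext; simp [lukZero]
      rw [h0, hz]; simp
    | succ j ih =>
      intro hj
      have hj' : j ≤ (m:ℕ) := Nat.le_of_succ_le hj
      have hstep : ujElt m (j+1) hj = lukOplus (ujElt m j hj') (ujElt m 1 hM1) := by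
        apply Subtype.ext
        show ((j+1:ℕ):ℚ)/(m:ℕ) = min 1 ((j:ℚ)/(m:ℕ) + ((1:ℕ):ℚ)/(m:ℕ))
        rw [← add_div]
        rw [min_eq_right]
        · push_cast; ring_nf
        · rw [div_le_one hM]
          push_cast
          exact_mod_cast hj
      rw [hstep, hplus, ih hj', ← hxdef]
      rcases le_or_gt 1 ((j:ℚ) * x) with h1 | h1
      · rw [min_eq_left h1,
            min_eq_left (by linarith : (1:ℚ) ≤ 1 + x),
            min_eq_left (by push_cast; nlinarith)]
      · rw [min_eq_right h1.le]
        have heq : (j:ℚ) * x + x = ((j+1:ℕ):ℚ) * x := by push_cast; ring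
        rw [heq]
  -- top element
  have htop : φ (ujElt m (m:ℕ) le_rfl) = 1 := by
    have h1 : ujElt m (m:ℕ) le_rfl = lukNeg (lukZero m) := by
      apply Subtype.ext
      show (((m:ℕ):ℕ):ℚ)/((m:ℕ):ℚ) = 1 - (lukZero m).1
      rw [div_self hM.ne']; simp [lukZero]
    rw [h1, hneg, hz]; ring
  have hMx : 1 ≤ ((m:ℕ):ℚ) * x := by
    have h2 := key (m:ℕ) le_rfl
    rw [htop] at h2
    by_contra h
    push_neg at h
    rw [min_eq_right h.le] at h2
    linarith
  have hxpos : 0 < x := by nlinarith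
  -- negation relation gives x = 1/m
  have hxval : x = 1 / ((m:ℕ):ℚ) := by
    have hMm1 : (m:ℕ) - 1 ≤ (m:ℕ) := Nat.sub_le _ _
    have hnegu : lukNeg (ujElt m 1 hM1) = ujElt m ((m:ℕ)-1) hMm1 := by
      apply Subtype.ext
      show 1 - ((1:ℕ):ℚ)/(m:ℕ) = (((m:ℕ)-1:ℕ):ℚ)/(m:ℕ)
      rw [Nat.cast_sub hM1, sub_div, div_self hM.ne']
    have h1 : φ (lukNeg (ujElt m 1 hM1)) = 1 - x := hneg _
    rw [hnegu, key ((m:ℕ)-1) hMm1] at h1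
    have hcast : (((m:ℕ)-1:ℕ):ℚ) = ((m:ℕ):ℚ) - 1 := by
      rw [Nat.cast_sub hM1]; push_cast; ring
    rw [hcast] at h1
    rcases le_or_gt 1 ((((m:ℕ):ℚ)-1) * x) with h2 | h2
    · rw [min_eq_left h2] at h1
      nlinarith
    · rw [min_eq_right h2.le] at h1
      have h3 : ((m:ℕ):ℚ) * x = 1 := by nlinarith
      field_simp
      linarith [h3]
  constructor
  · intro u
    obtain ⟨k, hk, hu⟩ := u.2
    have h4 : u = ujElt m k hk := Subtype.ext hu
    rw [h4, key k hk, hxval, ujElt_val]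
    rw [mul_one_div, min_eq_right]
    rw [div_le_one hM]
    exact_mod_cast hk
  · obtain ⟨k, hk, hu⟩ := hmem (ujElt m 1 hM1)
    rw [← hxdef, hxval] at hu
    have h5 : (N:ℕ) = k * (m:ℕ) := by
      have h1 : ((N:ℕ):ℚ) = ((k * (m:ℕ) : ℕ):ℚ) := by
        push_cast
        field_simp at hu
        linarith [hu]
      exact_mod_cast h1
    exact ⟨k, by rw [h5, mul_comm]⟩

end LukCrit
namespace LukCrit

/-- The element 1 of Łₙ. -/
def lukOne (n : ℕ+) : Luk n :=
  ⟨1, (n:ℕ), le_rfl, by rw [div_self]; exact_mod_cast n.pos.ne'⟩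

@[simp] lemma lukOne_val (n : ℕ+) : (lukOne n).1 = 1 := rfl
@[simp] lemma lukZero_val (n : ℕ+) : (lukZero n).1 = 0 := rfl
@[simp] lemma lukNeg_val {n : ℕ+} (x : Luk n) : (lukNeg x).1 = 1 - x.1 := rfl
@[simp] lemma lukOplus_val {n : ℕ+} (x y : Luk n) :
    (lukOplus x y).1 = min 1 (x.1 + y.1) := rfl

variable {l : ℕ} {n : Fin l → ℕ+}

/-- The "characteristic" element with 1 at coordinate i and 0 elsewhere. -/
def eelt (n : Fin l → ℕ+) (i : Fin l) : ∀ k, Luk (n k) :=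
  fun k => if k = i then lukOne (n k) else lukZero (n k)

lemma eelt_self (i : Fin l) : eelt n i i = lukOne (n i) := if_pos rfl

lemma eelt_ne {i k : Fin l} (h : k ≠ i) : eelt n i k = lukZero (n k) := if_neg h

/-- The element with given value at coordinate i and 0 elsewhere. -/
def single (n : Fin l → ℕ+) (i : Fin l) (u : Luk (n i)) : ∀ k, Luk (n k) :=
  fun k => if hk : k = i then ⟨u.1, by subst hk; exact u.2⟩ else lukZero (n k)

@[simp] lemma single_val_self (i : Fin l) (u : Luk (n i)) :
    single n i u i = u := by
  apply Subtype.ext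
  simp [single]

lemma single_val_of_ne {i k : Fin l} (h : k ≠ i) (u : Luk (n i)) :
    single n i u k = lukZero (n k) := by
  simp [single, h]

lemma hom_coord (hl : 1 ≤ l) (N : ℕ+) (h : (∀ i, Luk (n i)) → ℚ)
    (hmem : ∀ a, ∃ k : ℕ, k ≤ (N:ℕ) ∧ h a = (k:ℚ) / (N:ℕ))
    (hz : h (fun i => lukZero (n i)) = 0)
    (hneg : ∀ a, h (fun i => lukNeg (a i)) = 1 - h a)
    (hplus : ∀ a b, h (fun i => lukOplus (a i) (b i)) = min 1 (h a + h b)) :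
    ∃ i, ((n i:ℕ) ∣ (N:ℕ)) ∧ ∀ a, h a = (a i).1 := by
  have hnn : ∀ a, 0 ≤ h a := by
    intro a
    obtain ⟨k, hk, ha⟩ := hmem a
    rw [ha]; positivity
  have hle1 : ∀ a, h a ≤ 1 := by
    intro a
    obtain ⟨k, hk, ha⟩ := hmem a
    have hN : (0:ℚ) < ((N:ℕ):ℚ) := by exact_mod_cast N.pos
    rw [ha, div_le_one hN]
    exact_mod_cast hk
  -- each h (eelt i) is 0 or 1
  have hidem : ∀ i, h (eelt n i) = 0 ∨ h (eelt n i) = 1 := by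
    intro i
    have hee : eelt n i = fun k => lukOplus (eelt n i k) (eelt n i k) := by
      funext k
      apply Subtype.ext
      by_cases hk : k = i
      · subst hk
        rw [eelt_self]
        simp
      · rw [eelt_ne hk]
        simp
    have h1 : h (eelt n i) = min 1 (h (eelt n i) + h (eelt n i)) := by
      conv_lhs => rw [hee]
      rw [hplus]
    rcases le_or_gt 1 (h (eelt n i) + h (eelt n i)) with h2 | h2
    · right; rw [min_eq_left h2] at h1; exact h1
    · left; rw [min_eq_right h2.le] at h1; linarith
  -- some h (eelt i) = 1
  have hexists : ∃ i, h (eelt n i) = 1 := by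
    by_contra hno
    push_neg at hno
    have hzero : ∀ i, h (eelt n i) = 0 := by
      intro i
      rcases hidem i with h0 | h1
      · exact h0
      · exact absurd h1 (hno i)
    have hpart : ∀ m : ℕ, m ≤ l →
        h (fun k : Fin l => if k.1 < m then lukOne (n k) else lukZero (n k)) = 0 := by
      intro m
      induction m with
      | zero =>
        intro _
        have he : (fun k : Fin l => if k.1 < 0 then lukOne (n k) else lukZero (n k)) =
            (fun k => lukZero (n k)) := by
          funext k; simp
        rw [he, hz]
      | succ m ih =>
        intro hm
        have hm' : m ≤ l := Nat.le_of_succ_le hm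
        have hml : m < l := hm
        have hstep : (fun k : Fin l => if k.1 < m+1 then lukOne (n k) else lukZero (n k)) =
            (fun k : Fin l => lukOplus ((if k.1 < m then lukOne (n k) else lukZero (n k)))
              (eelt n ⟨m, hml⟩ k)) := by
          funext k
          apply Subtype.ext
          have heq : (k = (⟨m, hml⟩ : Fin l)) ↔ k.1 = m := by
            constructor
            · intro hh; rw [hh]
            · intro hh; exact Fin.ext hh
          by_cases h1 : k.1 < m
          · rw [if_pos (by omega), if_pos h1, eelt_ne (fun hh => by have := heq.mp hh; omega)]
            simp
          · by_cases h2 : k.1 = m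
            · have : k = (⟨m, hml⟩ : Fin l) := heq.mpr h2
              rw [if_pos (by omega), if_neg h1, this, eelt_self]
              simp
            · rw [if_neg (by omega), if_neg h1, eelt_ne (fun hh => by have := heq.mp hh; omega)]
              simp
        rw [hstep, hplus, ih hm', hzero ⟨m, hml⟩]
        simp
    have htopz := hpart l le_rfl
    have htope : (fun k : Fin l => if k.1 < l then lukOne (n k) else lukZero (n k)) =
        (fun k => lukNeg (lukZero (n k))) := by
      funext k
      apply Subtype.ext
      rw [if_pos k.2]
      simp
    rw [htope, hneg, hz] at htopz
    norm_num at htopz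
  obtain ⟨i, hi⟩ := hexists
  -- h a = h (single n i (a i))
  have hkey : ∀ a, h a = h (single n i (a i)) := by
    intro a
    have hc : single n i (a i) =
        (fun k => lukNeg (lukOplus (lukNeg (a k)) (lukNeg (eelt n i k)))) := by
      funext k
      apply Subtype.ext
      by_cases hk : k = i
      · subst hk
        rw [single_val_self, eelt_self]
        simp only [lukNeg_val, lukOplus_val, lukOne_val]
        rw [min_eq_right (by linarith [luk_nonneg (a k)])]
        ring
      · rw [single_val_of_ne hk, eelt_ne hk]
        simp only [lukZero_val, lukNeg_val, lukOplus_val]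
        rw [min_eq_left (by linarith [luk_le_one (a k)])]
        ring
    rw [hc, hneg, hplus, hneg, hneg, hi]
    rw [min_eq_right (by linarith [hnn a])]
    ring
  have hsz : single n i (lukZero (n i)) = (fun k => lukZero (n k)) := by
    funext k
    by_cases hk : k = i
    · subst hk; rw [single_val_self]
    · rw [single_val_of_ne hk]
  have hrig := chain_rigidity (m := n i) (N := N) (fun u => h (single n i u))
    (fun u => hmem _)
    (by show h (single n i (lukZero (n i))) = 0
        rw [hsz, hz])
    (by
      intro u
      show h (single n i (lukNeg u)) = 1 - h (single n i u)
      have h2 := hneg (single n i u)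
      have h3 := hkey (fun k => lukNeg (single n i u k))
      simp only [single_val_self] at h3
      rw [← h3, h2])
    (by
      intro u v
      show h (single n i (lukOplus u v)) = min 1 (h (single n i u) + h (single n i v))
      have h2 := hplus (single n i u) (single n i v)
      have h3 := hkey (fun k => lukOplus (single n i u k) (single n i v k))
      simp only [single_val_self] at h3
      rw [← h3, h2])
  refine ⟨i, hrig.2, fun a => ?_⟩
  rw [hkey a]
  exact hrig.1 (a i)

end LukCrit
namespace LukCrit

variable {l : ℕ} {n : Fin l → ℕ+}

lemma critical_of_unique (hl : 1 ≤ l) (n : Fin l → ℕ+)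
    (H2 : ∀ j j' : Fin l, (∃ i, i ≠ j ∧ (n i : ℕ) ∣ (n j : ℕ)) →
      (∃ i', i' ≠ j' ∧ (n i' : ℕ) ∣ (n j' : ℕ)) → j = j') :
    ProdLukCritical n := by
  rintro ⟨I, B, hB, f, hinj, hplus, hneg, hz⟩
  by_cases hI : Nonempty I
  case neg =>
    -- empty index type: f cannot be injective
    have hfe : f (fun k => lukNeg (lukZero (n k))) = f (fun k => lukZero (n k)) := by
      funext t
      exact absurd ⟨t⟩ hI
    have := congrFun (hinj hfe) ⟨0, hl⟩
    have hval := congrArg Subtype.val this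
    simp [lukNeg_val, lukZero_val] at hval
  case pos =>
    -- structure of each component homomorphism
    have hσ : ∀ (t : I) (k : Fin l), ∃ i, ((n i:ℕ) ∣ (n k:ℕ)) ∧
        ∀ a, ((f a t : ∀ i, Luk (n i)) k).1 = (a i).1 := by
      intro t k
      apply hom_coord hl (n k) (fun a => ((f a t : ∀ i, Luk (n i)) k).1)
      · intro a
        exact ((f a t : ∀ i, Luk (n i)) k).2
      · have := congrFun (hz t) k
        rw [this, lukZero_val]
      · intro a
        have := congrFun (hneg a t) k
        rw [this]
        rfl
      · intro a b
        have := congrFun (hplus a b t) k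
        rw [this]
        rfl
    choose σ hdvd hval using hσ
    -- no σ t is the identity
    have hnid : ∀ t : I, ∃ k, σ t k ≠ k := by
      intro t
      by_contra hc
      push_neg at hc
      have huniv : B t = Set.univ := by
        apply Set.eq_univ_of_forall
        intro a
        have hfa : (f a t : ∀ i, Luk (n i)) = a := by
          funext k
          apply Subtype.ext
          rw [hval t k a, hc k]
        have := (f a t).2
        rwa [hfa] at this
      exact (hB t).2 huniv
    obtain ⟨t₀⟩ := hI
    obtain ⟨j₀, hj₀⟩ := hnid t₀
    -- any bad coordinate equals j₀
    have huniq : ∀ (t : I) (k : Fin l), σ t k ≠ k → k = j₀ := by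
      intro t k hk
      exact H2 k j₀ ⟨σ t k, hk, hdvd t k⟩ ⟨σ t₀ j₀, hj₀, hdvd t₀ j₀⟩
    -- σ t k never equals j₀
    have havoid : ∀ (t : I) (k : Fin l), σ t k ≠ j₀ := by
      intro t k
      by_cases hk : k = j₀
      · subst hk
        obtain ⟨k', hk'⟩ := hnid t
        have := huniq t k' hk'
        subst this
        exact hk'
      · intro hcon
        have : σ t k ≠ k := by rw [hcon]; exact fun hh => hk hh.symm
        exact hk (huniq t k this)
    -- contradiction with injectivity
    set a : ∀ k, Luk (n k) := fun k => if k = j₀ then lukOne (n k) else lukZero (n k) with ha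
    set b : ∀ k, Luk (n k) := fun k => lukZero (n k) with hb
    have hfab : f a = f b := by
      funext t
      apply Subtype.ext
      funext k
      apply Subtype.ext
      rw [hval t k a, hval t k b]
      show (if σ t k = j₀ then lukOne (n (σ t k)) else lukZero (n (σ t k))).1 =
        (lukZero (n (σ t k))).1
      rw [if_neg (havoid t k)]
    have hab := congrFun (hinj hfab) j₀
    have hvala := congrArg Subtype.val hab
    show False
    rw [ha, hb] at hvala
    simp only [if_pos rfl, lukOne_val, lukZero_val] at hvala
    norm_num at hvala

end LukCrit
namespace LukCrit

variable {l : ℕ} {n : Fin l → ℕ+}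

/-- Replace coordinate j by (a copy of) coordinate i, using n i ∣ n j. -/
def upd (i j : Fin l) (hd : (n i:ℕ) ∣ (n j:ℕ)) (a : ∀ k, Luk (n k)) : ∀ k, Luk (n k) :=
  fun k => if hk : k = j then
    ⟨(a i).1, by subst hk; exact luk_val_mem_of_dvd hd (a i)⟩
  else a k

lemma upd_val_self (i j : Fin l) (hd : (n i:ℕ) ∣ (n j:ℕ)) (a : ∀ k, Luk (n k)) :
    (upd i j hd a j).1 = (a i).1 := by
  simp [upd]

lemma upd_of_ne (i j : Fin l) (hd : (n i:ℕ) ∣ (n j:ℕ)) (a : ∀ k, Luk (n k))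
    {k : Fin l} (hk : k ≠ j) : upd i j hd a k = a k := by
  simp [upd, hk]

/-- The diagonal-style subalgebra {a : a_i = a_j} (as values). -/
def diagS (n : Fin l → ℕ+) (i j : Fin l) : Set (∀ k, Luk (n k)) :=
  {a | (a i).1 = (a j).1}

lemma diagS_subalg (i j : Fin l) : IsProdSubalg (diagS n i j) := by
  refine ⟨?_, ?_, ?_⟩
  · show (lukZero (n i)).1 = (lukZero (n j)).1
    simp
  · intro x hx y hy
    show (lukOplus (x i) (y i)).1 = (lukOplus (x j) (y j)).1
    simp only [lukOplus_val]
    rw [hx, hy]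
  · intro x hx
    show (lukNeg (x i)).1 = (lukNeg (x j)).1
    simp only [lukNeg_val]
    rw [hx]

lemma diagS_ne_univ {i j : Fin l} (hij : i ≠ j) : diagS n i j ≠ Set.univ := by
  intro hu
  have : (fun k => if k = j then lukOne (n k) else lukZero (n k)) ∈ diagS n i j := by
    rw [hu]; trivial
  have h2 : ((if i = j then lukOne (n i) else lukZero (n i)) : Luk (n i)).1 =
      ((if j = j then lukOne (n j) else lukZero (n j)) : Luk (n j)).1 := this
  rw [if_neg hij, if_pos rfl] at h2
  simp at h2

lemma upd_mem_diagS (i j : Fin l) (hij : i ≠ j) (hd : (n i:ℕ) ∣ (n j:ℕ))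
    (a : ∀ k, Luk (n k)) : upd i j hd a ∈ diagS n i j := by
  show (upd i j hd a i).1 = (upd i j hd a j).1
  rw [upd_of_ne i j hd a hij, upd_val_self]

lemma upd_oplus (i j : Fin l) (hd : (n i:ℕ) ∣ (n j:ℕ)) (a b : ∀ k, Luk (n k)) :
    upd i j hd (fun k => lukOplus (a k) (b k)) =
      fun k => lukOplus (upd i j hd a k) (upd i j hd b k) := by
  funext k
  apply Subtype.ext
  by_cases hk : k = j
  · subst hk
    rw [upd_val_self, lukOplus_val, lukOplus_val, upd_val_self, upd_val_self]
  · rw [upd_of_ne i j hd _ hk, lukOplus_val, lukOplus_val,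
      upd_of_ne i j hd a hk, upd_of_ne i j hd b hk]

lemma upd_neg (i j : Fin l) (hd : (n i:ℕ) ∣ (n j:ℕ)) (a : ∀ k, Luk (n k)) :
    upd i j hd (fun k => lukNeg (a k)) = fun k => lukNeg (upd i j hd a k) := by
  funext k
  apply Subtype.ext
  by_cases hk : k = j
  · subst hk
    rw [upd_val_self, lukNeg_val, lukNeg_val, upd_val_self]
  · rw [upd_of_ne i j hd _ hk, lukNeg_val, lukNeg_val, upd_of_ne i j hd a hk]

lemma upd_zero (i j : Fin l) (hd : (n i:ℕ) ∣ (n j:ℕ)) :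
    upd i j hd (fun k => lukZero (n k)) = fun k => lukZero (n k) := by
  funext k
  apply Subtype.ext
  by_cases hk : k = j
  · subst hk
    rw [upd_val_self]
    simp
  · rw [upd_of_ne i j hd _ hk]

lemma not_critical (i j i' j' : Fin l)
    (hij : i ≠ j) (hij' : i' ≠ j') (hjj' : j ≠ j')
    (hd : (n i:ℕ) ∣ (n j:ℕ)) (hd' : (n i':ℕ) ∣ (n j':ℕ)) :
    ¬ ProdLukCritical n := by
  intro hcrit
  apply hcrit
  refine ⟨Bool, fun t => if t then diagS n i j else diagS n i' j', ?_, ?_⟩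
  · intro t
    cases t
    · simpa using ⟨diagS_subalg i' j', diagS_ne_univ hij'⟩
    · simpa using ⟨diagS_subalg i j, diagS_ne_univ hij⟩
  · refine ⟨fun a t => match t with
      | true => ⟨upd i j hd a, by simpa using upd_mem_diagS i j hij hd a⟩
      | false => ⟨upd i' j' hd' a, by simpa using upd_mem_diagS i' j' hij' hd' a⟩,
      ?_, ?_, ?_, ?_⟩
    · intro a b hab
      funext k
      by_cases hk : k = j
      · subst hk
        have h2 : upd i' j' hd' a k = upd i' j' hd' b k :=
          congrFun (congrArg Subtype.val (congrFun hab false)) k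
        rwa [upd_of_ne i' j' hd' a hjj', upd_of_ne i' j' hd' b hjj'] at h2
      · have h2 : upd i j hd a k = upd i j hd b k :=
          congrFun (congrArg Subtype.val (congrFun hab true)) k
        rwa [upd_of_ne i j hd a hk, upd_of_ne i j hd b hk] at h2
    · intro a b t
      cases t
      · show upd i' j' hd' (fun k => lukOplus (a k) (b k)) = _
        exact upd_oplus i' j' hd' a b
      · show upd i j hd (fun k => lukOplus (a k) (b k)) = _
        exact upd_oplus i j hd a b
    · intro a t
      cases t
      · show upd i' j' hd' (fun k => lukNeg (a k)) = _
        exact upd_neg i' j' hd' a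
      · show upd i j hd (fun k => lukNeg (a k)) = _
        exact upd_neg i j hd a
    · intro t
      cases t
      · show upd i' j' hd' (fun k => lukZero (n k)) = _
        exact upd_zero i' j' hd'
      · show upd i j hd (fun k => lukZero (n k)) = _
        exact upd_zero i j hd

end LukCrit
/-- Characterization of critical products of Łukasiewicz chains (Theorem 2.5):
∏ Ł_(n i) is critical iff the n i are pairwise distinct and there is at most one
index j such that some other n i divides n j. -/
theorem prod_luk_critical_iff (l : ℕ) (hl : 1 ≤ l) (n : Fin l → ℕ+) :
    ProdLukCritical n ↔
      ((∀ i j : Fin l, i ≠ j → n i ≠ n j) ∧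
        ∀ j j' : Fin l, (∃ i, i ≠ j ∧ (n i : ℕ) ∣ (n j : ℕ)) →
          (∃ i', i' ≠ j' ∧ (n i' : ℕ) ∣ (n j' : ℕ)) → j = j') := by
  constructor
  · intro hcrit
    have H2 : ∀ j j' : Fin l, (∃ i, i ≠ j ∧ (n i : ℕ) ∣ (n j : ℕ)) →
        (∃ i', i' ≠ j' ∧ (n i' : ℕ) ∣ (n j' : ℕ)) → j = j' := by
      by_contra hc
      push_neg at hc
      obtain ⟨j, j', ⟨i, hi, hdi⟩, ⟨i', hi', hdi'⟩, hjj'⟩ := hc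
      exact LukCrit.not_critical i j i' j' (fun h => hi (h ▸ rfl))
        (fun h => hi' (h ▸ rfl)) hjj' hdi hdi' hcrit
    refine ⟨?_, H2⟩
    intro i j hij heq
    have h1 : (n i : ℕ) ∣ (n j : ℕ) := by rw [heq]
    have h2 : (n j : ℕ) ∣ (n i : ℕ) := by rw [heq]
    exact hij (H2 j i ⟨i, hij, h1⟩ ⟨j, hij.symm, h2⟩).symm
  · rintro ⟨_, H2⟩
    exact LukCrit.critical_of_unique hl n H2
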